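/- The seller's revenue under IDM is at least the revenue of the second-price (VCG) auction held only among the seller's direct neighbours: v^{1st}_{N_{-c_1}} ≥ v^{2nd}_{r_s}, where v^{2nd}_{r_s} is the second-highest valuation among s's neighbours. -/
import Mathlib


/-- The set of buyers still connected to the seller `s` after removing the set `D`:
vertices `y ≠ s`, `y ∉ D`, admitting a walk from `s` avoiding `D`. -/
def remConn {V : Type*} (G : SimpleGraph V) (s : V) (D : Set V) : Set V :=
  {y | y ≠ s ∧ y ∉ D ∧ ∃ p : G.Walk s y, ∀ d ∈ D, d ∉ p.support}

/-- The highest reported valuation among buyers still connected to `s` after removing `D`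
(`0` if there are none). -/
noncomputable def v1 {V : Type*} (G : SimpleGraph V) (s : V) (v : V → ℝ) (D : Set V) : ℝ :=
  sSup (insert 0 (v '' remConn G s D))

/-- `D` is a cut set of buyer `i`: every walk from the seller `s` to `i` meets `D`. -/
def isCutSet {V : Type*} (G : SimpleGraph V) (s i : V) (D : Set V) : Prop :=
  ∀ p : G.Walk s i, ∃ d ∈ D, d ∈ p.support

/-- `j` is a strong critical ancestor of `i`: `j` is a buyer distinct from `i`
lying on every walk from the seller `s` to `i`. -/
def isSCA {V : Type*} (G : SimpleGraph V) (s i j : V) : Prop :=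
  j ≠ i ∧ j ≠ s ∧ ∀ p : G.Walk s i, j ∈ p.support

/-- The critical descendant set of `x`: buyers `y` such that every walk from `s` to `y`
passes through `x`, together with `x` itself. -/
def critDesc {V : Type*} (G : SimpleGraph V) (s x : V) : Set V :=
  {y | ∀ p : G.Walk s y, x ∈ p.support} ∪ {x}

/-- The second-highest valuation over a set of buyers (0 if fewer than two buyers):
the supremum over distinct pairs of the smaller of the two valuations. -/
noncomputable def secondPrice {V : Type*} (v : V → ℝ) (D : Set V) : ℝ :=
  sSup (insert 0 {x | ∃ i ∈ D, ∃ j ∈ D, i ≠ j ∧ x = min (v i) (v j)})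

/-- The seller's IDM revenue `v1_{N_{-c_1}}` is at least the revenue of the second-price
auction held only among the seller's neighbours. -/
theorem idm_revenue_ge_vcg_among_neighbors {V : Type*} [Fintype V]
    (G : SimpleGraph V) (s : V) (v : V → ℝ) (c1 : V)
    (hc1 : G.Adj s c1) (hv : ∀ i, 0 ≤ v i) :
    secondPrice v (G.neighborSet s) ≤ v1 G s v {c1} := by

  have hbdd : BddAbove (insert (0:ℝ) (v '' remConn G s {c1})) :=
    (Set.Finite.insert 0 ((Set.toFinite _).image v)).bddAbove
  have hv1_nonneg : 0 ≤ v1 G s v {c1} := le_csSup hbdd (Set.mem_insert 0 _)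
  have key : ∀ w, w ≠ s → w ≠ c1 → G.Adj s w → v w ≤ v1 G s v {c1} := by
    intro w hws hwc hadj
    refine le_csSup hbdd (Set.mem_insert_of_mem _ ⟨w, ⟨hws, ?_, ?_⟩, rfl⟩)
    · simpa using hwc
    · refine ⟨hadj.toWalk, ?_⟩
      intro d hd
      simp only [Set.mem_singleton_iff] at hd
      subst hd
      simp [SimpleGraph.Walk.support, hc1.ne', hwc.symm]
  apply Real.sSup_le _ hv1_nonneg
  rintro x (rfl | ⟨i, hi, j, hj, hij, rfl⟩)
  · exact hv1_nonneg
  · simp only [SimpleGraph.mem_neighborSet] at hi hj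
    rcases eq_or_ne i c1 with h | h
    · subst h
      exact le_trans (min_le_right _ _) (key j hj.ne' (fun e => hij e.symm) hj)
    · exact le_trans (min_le_left _ _) (key i hi.ne' h hi)
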